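/- Policy improvement: Suppose the coefficients and rewards satisfy the standing assumptions and the Hölder assumption, and let (V₁^λ,…,V_m^λ) be a bounded classical solution of the exploratory HJB system. Let (V₁⁰,…,V_m⁰) be any initial guess with each V_i⁰ continuous on D̄, and for n ≥ 0 define the policy π^{n+1} by π_{ij}^{n+1}(t,x) = exp((V_j^n(t,x) − g_{ij} − V_i^n(t,x))/λ) for j ≠ i, and let (V₁^{n+1},…,V_m^{n+1}) be the bounded classical solution (each in C^{1,2}(D) ∩ C(D̄)) of the linear system ∂_t V_i^{n+1} + L^i_x V_i^{n+1} + f(·,·,i) + H_i(π_i^{n+1}, (V₁^{n+1},…,V_m^{n+1})) = 0 on D with V_i^{n+1}(T,·) = h. Then for all n ≥ 1 and all (t,x,i) ∈ D̄ × I_m, one has V_i^n(t,x) ≤ V_i^{n+1}(t,x) ≤ V_i^λ(t,x). -/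

import Mathlib

open Filter MeasureTheory Finset Topology

noncomputable section

/-- The state space ℝⁿ, with the (sup) norm on `Fin n → ℝ`. -/
abbrev Vec (n : ℕ) := Fin n → ℝ

/-- Partial derivative in time of `φ : ℝ → Vec n → ℝ`. -/
def pderivT {n : ℕ} (φ : ℝ → Vec n → ℝ) (t : ℝ) (x : Vec n) : ℝ :=
  deriv (fun s => φ s x) t

/-- First partial derivative in the `k`-th space direction. -/
def pderivX {n : ℕ} (φ : ℝ → Vec n → ℝ) (k : Fin n) (t : ℝ) (x : Vec n) : ℝ :=
  fderiv ℝ (fun y => φ t y) x (Pi.single k 1)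

/-- Second partial derivative in the space directions `k, l`. -/
def pderivXX {n : ℕ} (φ : ℝ → Vec n → ℝ) (k l : Fin n) (t : ℝ) (x : Vec n) : ℝ :=
  fderiv ℝ (fun y => pderivX φ l t y) x (Pi.single k 1)

/-- The parabolic domain `D = [0,T) × ℝⁿ`. -/
def domD (n : ℕ) (T : ℝ) : Set (ℝ × Vec n) := Set.Ico 0 T ×ˢ Set.univ

/-- The closed parabolic domain `D̄ = [0,T] × ℝⁿ`. -/
def domDbar (n : ℕ) (T : ℝ) : Set (ℝ × Vec n) := Set.Icc 0 T ×ˢ Set.univ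

/-- `φ` is of class `C^{1,2}` on `D`: `φ`, `∂_t φ`, `D_x φ` and `D_x² φ`
exist and are continuous on `D`. -/
def IsC12On {n : ℕ} (φ : ℝ → Vec n → ℝ) (D : Set (ℝ × Vec n)) : Prop :=
  ContinuousOn (fun p => φ p.1 p.2) D ∧
  (∀ p ∈ D, DifferentiableAt ℝ (fun s => φ s p.2) p.1) ∧
  (∀ p ∈ D, ContDiffAt ℝ 2 (fun y => φ p.1 y) p.2) ∧
  ContinuousOn (fun p => pderivT φ p.1 p.2) D ∧
  (∀ k, ContinuousOn (fun p => pderivX φ k p.1 p.2) D) ∧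
  (∀ k l, ContinuousOn (fun p => pderivXX φ k l p.1 p.2) D)

/-- The second-order operator `L φ = μ·D_x φ + ½ tr(σσᵀ D_x² φ)` for given
drift `μ` and volatility `σ` (for one fixed regime). -/
def Lop {n d : ℕ} (μ : ℝ → Vec n → Vec n) (σ : ℝ → Vec n → Fin n → Fin d → ℝ)
    (φ : ℝ → Vec n → ℝ) (t : ℝ) (x : Vec n) : ℝ :=
  (∑ k, μ t x k * pderivX φ k t x) +
    (1 / 2) * ∑ k, ∑ l, (∑ a, σ t x k a * σ t x l a) * pderivXX φ k l t x

/-- The data of the optimal switching problem together with the standing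
assumptions (Assumptions 2.1 and 2.2 of the paper). -/
structure SwitchingSetting (n d m : ℕ) where
  T : ℝ
  T_pos : 0 < T
  m_ge : 2 ≤ m
  μ : ℝ → Vec n → Fin m → Vec n
  σ : ℝ → Vec n → Fin m → Fin n → Fin d → ℝ
  f : ℝ → Vec n → Fin m → ℝ
  h : Vec n → ℝ
  g : Fin m → Fin m → ℝ
  Kfh : ℝ
  /-- `μ` and `σ` are uniformly Lipschitz continuous in `x`. -/
  lip : ∃ L > 0, ∀ s ∈ Set.Icc (0 : ℝ) T, ∀ x₁ x₂ : Vec n, ∀ i,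
    ‖μ s x₁ i - μ s x₂ i‖ + ‖σ s x₁ i - σ s x₂ i‖ ≤ L * ‖x₁ - x₂‖
  /-- `μ` and `σ` have linear growth in `x`. -/
  growth : ∃ C > 0, ∀ s ∈ Set.Icc (0 : ℝ) T, ∀ x : Vec n, ∀ i,
    ‖μ s x i‖ + ‖σ s x i‖ ≤ C * (1 + ‖x‖)
  /-- Uniform ellipticity of `σσᵀ`. -/
  elliptic : ∃ σ₀ > 0, ∀ t ∈ Set.Icc (0 : ℝ) T, ∀ x : Vec n, ∀ i, ∀ ξ : Vec n,
    σ₀ * ∑ k, ξ k ^ 2 ≤ ∑ k, ∑ l, ξ k * (∑ a, σ t x i k a * σ t x i l a) * ξ l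
  /-- Continuity of the running reward. -/
  f_cont : ∀ i, ContinuousOn (fun p : ℝ × Vec n => f p.1 p.2 i) (Set.Icc (0 : ℝ) T ×ˢ Set.univ)
  /-- Continuity of the terminal reward. -/
  h_cont : Continuous h
  /-- Boundedness of the rewards: `|f| + |h| ≤ K_{f,h}`. -/
  fh_bound : ∀ t ∈ Set.Icc (0 : ℝ) T, ∀ x : Vec n, ∀ i, |f t x i| + |h x| ≤ Kfh
  /-- Positive switching costs. -/
  g_pos : ∀ i j, i ≠ j → 0 < g i j
  g_diag : ∀ i, g i i = 0
  /-- Strict triangle condition on the switching costs. -/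
  g_tri : ∀ i j k, j ≠ i → j ≠ k → g i k < g i j + g j k

/-- The switching obstacle `max_{j ≠ i} (u_j(t,x) - g_{ij})`. -/
def obstacle {n d m : ℕ} (S : SwitchingSetting n d m) (u : Fin m → ℝ → Vec n → ℝ)
    (i : Fin m) (t : ℝ) (x : Vec n) : ℝ :=
  sSup ((fun j => u j t x - S.g i j) '' {j | j ≠ i})

/-- Viscosity supersolution of the system of HJB variational inequalities. -/
def IsViscSupersolution {n d m : ℕ} (S : SwitchingSetting n d m)
    (u : Fin m → ℝ → Vec n → ℝ) : Prop :=
  (∀ i x, u i S.T x = S.h x) ∧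
  (∀ i, LowerSemicontinuousOn (fun p : ℝ × Vec n => u i p.1 p.2) (domD n S.T)) ∧
  ∀ i, ∀ p ∈ domD n S.T, ∀ φ : ℝ → Vec n → ℝ, IsC12On φ (domD n S.T) →
    IsLocalMinOn (fun q : ℝ × Vec n => u i q.1 q.2 - φ q.1 q.2) (domD n S.T) p →
    0 ≤ min (-(pderivT φ p.1 p.2) - Lop (fun t x => S.μ t x i) (fun t x => S.σ t x i) φ p.1 p.2
              - S.f p.1 p.2 i)
            (u i p.1 p.2 - obstacle S u i p.1 p.2)

/-- Viscosity subsolution of the system of HJB variational inequalities. -/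
def IsViscSubsolution {n d m : ℕ} (S : SwitchingSetting n d m)
    (u : Fin m → ℝ → Vec n → ℝ) : Prop :=
  (∀ i x, u i S.T x = S.h x) ∧
  (∀ i, UpperSemicontinuousOn (fun p : ℝ × Vec n => u i p.1 p.2) (domD n S.T)) ∧
  ∀ i, ∀ p ∈ domD n S.T, ∀ φ : ℝ → Vec n → ℝ, IsC12On φ (domD n S.T) →
    IsLocalMaxOn (fun q : ℝ × Vec n => u i q.1 q.2 - φ q.1 q.2) (domD n S.T) p →
    min (-(pderivT φ p.1 p.2) - Lop (fun t x => S.μ t x i) (fun t x => S.σ t x i) φ p.1 p.2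
          - S.f p.1 p.2 i)
        (u i p.1 p.2 - obstacle S u i p.1 p.2) ≤ 0

/-- Viscosity solution of the system of HJB variational inequalities. -/
def IsViscSolution {n d m : ℕ} (S : SwitchingSetting n d m)
    (u : Fin m → ℝ → Vec n → ℝ) : Prop :=
  IsViscSupersolution S u ∧ IsViscSubsolution S u

/-- Classical solution of the exploratory HJB system with temperature `lam`. -/
def IsClassicalSolutionExp {n d m : ℕ} (S : SwitchingSetting n d m) (lam : ℝ)
    (V : Fin m → ℝ → Vec n → ℝ) : Prop :=
  (∀ i, IsC12On (V i) (domD n S.T)) ∧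
  (∀ i, ContinuousOn (fun p : ℝ × Vec n => V i p.1 p.2) (domDbar n S.T)) ∧
  (∀ i, ∀ p ∈ domD n S.T,
    pderivT (V i) p.1 p.2
      + Lop (fun t x => S.μ t x i) (fun t x => S.σ t x i) (V i) p.1 p.2
      + S.f p.1 p.2 i
      + lam * ∑ j ∈ Finset.univ.erase i,
          Real.exp ((V j p.1 p.2 - S.g i j - V i p.1 p.2) / lam) = 0) ∧
  (∀ i x, V i S.T x = S.h x)

/-- Parabolic Hölder continuity with exponent `α` on `D` (with distance
`d(P,P') = (|t-t'| + |x-x'|²)^{1/2}`), together with boundedness. -/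
def ParabolicHolderOn {n : ℕ} (α : ℝ) (u : ℝ → Vec n → ℝ) (D : Set (ℝ × Vec n)) : Prop :=
  ∃ C, (∀ p ∈ D, |u p.1 p.2| ≤ C) ∧
    ∀ p ∈ D, ∀ q ∈ D,
      |u p.1 p.2 - u q.1 q.2| ≤ C * (|p.1 - q.1| + ‖p.2 - q.2‖ ^ 2) ^ (α / 2)

/-- Bounded Hölder continuous function on ℝⁿ with exponent `α`. -/
def HolderFn {n : ℕ} (α : ℝ) (u : Vec n → ℝ) : Prop :=
  ∃ C, (∀ x, |u x| ≤ C) ∧ ∀ x y, |u x - u y| ≤ C * ‖x - y‖ ^ α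

/-- `u ∈ C^{2+α}`: twice continuously differentiable with `u`, `D u`, `D² u`
Hölder continuous with exponent `α`. -/
def IsC2Holder {n : ℕ} (α : ℝ) (u : Vec n → ℝ) : Prop :=
  ContDiff ℝ 2 u ∧ HolderFn α u ∧
  (∀ k, HolderFn α (fun x => fderiv ℝ u x (Pi.single k 1))) ∧
  (∀ k l, HolderFn α
    (fun x => fderiv ℝ (fun y => fderiv ℝ u y (Pi.single l 1)) x (Pi.single k 1)))

/-- The Hölder assumption (Assumption 3.1): `f(·,·,i) ∈ C^α` and `h ∈ C^{2+α}`
for some `α ∈ (0,1)`. -/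
def HolderAssumption {n d m : ℕ} (S : SwitchingSetting n d m) (α : ℝ) : Prop :=
  α ∈ Set.Ioo (0 : ℝ) 1 ∧
  (∀ i, ParabolicHolderOn α (fun t x => S.f t x i) (domDbar n S.T)) ∧
  IsC2Holder α S.h

/-- The constant `K = K_{f,h} + λ max_{i} Σ_{j≠i} exp(-g_{ij}/λ)`. -/
def Kconst {n d m : ℕ} (S : SwitchingSetting n d m) (lam : ℝ) : ℝ :=
  S.Kfh + lam * sSup (Set.range fun i : Fin m =>
    ∑ j ∈ Finset.univ.erase i, Real.exp (-S.g i j / lam))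

/-- The entropy-regularized Hamiltonian
`H_i(π, y) = Σ_{j≠i} π_j (y_j - g_{ij} - y_i) + λ Σ_{j≠i} (π_j - π_j log π_j)`
(only the entries `π_j`, `j ≠ i`, are used; the convention `0 log 0 = 0` holds
since `Real.log 0 = 0`). -/
def Ham {m : ℕ} (lam : ℝ) (i : Fin m) (gi : Fin m → ℝ) (y : Fin m → ℝ)
    (π : Fin m → ℝ) : ℝ :=
  (∑ j ∈ Finset.univ.erase i, π j * (y j - gi j - y i)) +
    lam * ∑ j ∈ Finset.univ.erase i, (π j - π j * Real.log (π j))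


/-- One policy-iteration step: `(V^{n+1}, π^{n+1})` is obtained from `V^n` by
setting `π_{ij}^{n+1}(t,x) = exp((V_j^n(t,x) - g_{ij} - V_i^n(t,x))/λ)` and
letting `(V₁^{n+1},…,V_m^{n+1})` be the bounded classical solution
(`C^{1,2}(D) ∩ C(D̄)`) of the linear PDE system
`∂_t V_i^{n+1} + L^i V_i^{n+1} + f(·,·,i) + H_i(π_i^{n+1}, V^{n+1}) = 0` on `D`
with `V_i^{n+1}(T,·) = h`, starting from a continuous initial guess `V^0`. -/
def PolicyIterSeq {n d m : ℕ} (S : SwitchingSetting n d m) (lam : ℝ)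
    (V : ℕ → Fin m → ℝ → Vec n → ℝ) : Prop :=
  (∀ i, ContinuousOn (fun p : ℝ × Vec n => V 0 i p.1 p.2) (domDbar n S.T)) ∧
  ∀ N : ℕ,
    (∀ i, IsC12On (V (N + 1) i) (domD n S.T)) ∧
    (∀ i, ContinuousOn (fun p : ℝ × Vec n => V (N + 1) i p.1 p.2) (domDbar n S.T)) ∧
    (∃ C, ∀ i, ∀ p ∈ domDbar n S.T, |V (N + 1) i p.1 p.2| ≤ C) ∧
    (∀ i x, V (N + 1) i S.T x = S.h x) ∧
    (∀ i, ∀ p ∈ domD n S.T,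
      pderivT (V (N + 1) i) p.1 p.2
        + Lop (fun t x => S.μ t x i) (fun t x => S.σ t x i) (V (N + 1) i) p.1 p.2
        + S.f p.1 p.2 i
        + Ham lam i (S.g i) (fun j => V (N + 1) j p.1 p.2)
            (fun j => Real.exp ((V N j p.1 p.2 - S.g i j - V N i p.1 p.2) / lam)) = 0)


/-- Key entropy inequality: `π z + λ(π − π log π) ≤ λ e^{z/λ}`. -/
lemma entropy_le {lam z π : ℝ} (hlam : 0 < lam) (hπ : 0 ≤ π) :
    π * z + lam * (π - π * Real.log π) ≤ lam * Real.exp (z / lam) := by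
  rcases hπ.eq_or_lt with h | h
  · rw [← h]; simp; positivity
  · have h1 : z / lam - Real.log π + 1 ≤ Real.exp (z / lam) / π := by
      have := Real.add_one_le_exp (z / lam - Real.log π)
      rwa [Real.exp_sub, Real.exp_log h] at this
    have h3 : π * (Real.exp (z / lam) / π) = Real.exp (z / lam) := by
      field_simp
    have h2 : π * (z / lam) - π * Real.log π + π ≤ Real.exp (z / lam) := by
      nlinarith [mul_le_mul_of_nonneg_left h1 h.le]
    have hz : π * z = lam * (π * (z / lam)) := by field_simp
    nlinarith [mul_le_mul_of_nonneg_left h2 hlam.le]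

/-- Right derivative at a maximum over `[a,b]` is nonpositive. -/
lemma deriv_nonpos_right {f : ℝ → ℝ} {a b : ℝ} (hab : a < b)
    (hf : DifferentiableAt ℝ f a) (hmax : ∀ s ∈ Set.Icc a b, f s ≤ f a) :
    deriv f a ≤ 0 := by
  have h := hasDerivAt_iff_tendsto_slope.1 hf.hasDerivAt
  have h2 : Tendsto (slope f a) (𝓝[>] a) (𝓝 (deriv f a)) :=
    h.mono_left (nhdsWithin_mono _ (fun x hx => ne_of_gt hx))
  refine le_of_tendsto h2 ?_
  filter_upwards [Ioo_mem_nhdsGT_of_mem (Set.mem_Ico.2 ⟨le_refl a, hab⟩)] with s hs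
  rw [slope_def_field]
  apply div_nonpos_of_nonpos_of_nonneg
  · have := hmax s ⟨hs.1.le, hs.2.le⟩; linarith
  · linarith [hs.1]

/-- Second derivative test: at a global max the second derivative is `≤ 0`. -/
lemma deriv2_nonpos {g g' : ℝ → ℝ} {c : ℝ}
    (hg : ∀ᶠ s in 𝓝 (0:ℝ), HasDerivAt g (g' s) s)
    (hg' : HasDerivAt g' c 0)
    (hmax : ∀ s, g s ≤ g 0) : c ≤ 0 := by
  by_contra hc
  push_neg at hc
  have h0 : g' 0 = 0 := by
    have hd : deriv g 0 = g' 0 := hg.self_of_nhds.deriv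
    have hm : IsLocalMax g 0 := Filter.Eventually.of_forall hmax
    have := hm.deriv_eq_zero
    rw [hd] at this; exact this
  have hs : Tendsto (slope g' 0) (𝓝[>] 0) (𝓝 c) :=
    (hasDerivAt_iff_tendsto_slope.1 hg').mono_left
      (nhdsWithin_mono _ (fun x hx => ne_of_gt hx))
  have hpos : ∀ᶠ s in 𝓝[>] (0:ℝ), 0 < g' s := by
    filter_upwards [hs.eventually (eventually_gt_nhds hc), self_mem_nhdsWithin]
      with s h1 h2
    have hslope : slope g' 0 s = g' s / s := by
      rw [slope_def_field, h0, sub_zero, sub_zero]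
    rw [hslope] at h1
    have := mul_pos h1 (show (0:ℝ) < s from h2)
    rwa [div_mul_cancel₀ _ (ne_of_gt h2)] at this
  rw [eventually_nhdsWithin_iff] at hpos
  obtain ⟨δ, hδ, H⟩ := Metric.eventually_nhds_iff.mp (hpos.and hg)
  set b := δ / 2 with hb
  have hb0 : 0 < b := half_pos hδ
  have hmem : ∀ s ∈ Set.Icc (0:ℝ) b, dist s 0 < δ := by
    intro s hs
    rw [Real.dist_eq, sub_zero, abs_of_nonneg hs.1]
    calc s ≤ b := hs.2
    _ < δ := half_lt_self hδ
  have hmono : StrictMonoOn g (Set.Icc 0 b) := by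
    apply strictMonoOn_of_deriv_pos (convex_Icc 0 b)
    · intro s hs
      exact ((H (hmem s hs)).2.continuousAt).continuousWithinAt
    · intro s hs
      rw [interior_Icc] at hs
      have hd := H (hmem s ⟨hs.1.le, hs.2.le⟩)
      rw [hd.2.deriv]
      exact hd.1 hs.1
  have : g 0 < g b := hmono (Set.left_mem_Icc.2 hb0.le) (Set.right_mem_Icc.2 hb0.le) hb0
  exact absurd (hmax b) (not_le.2 this)


lemma diff_pderivX {n : ℕ} {f : ℝ → Vec n → ℝ} {t : ℝ} {x : Vec n} {l : Fin n}
    (hf : ContDiffAt ℝ 2 (fun y => f t y) x) :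
    DifferentiableAt ℝ (fun y => pderivX f l t y) x := by
  have h2 : ContDiffAt ℝ 1 (fderiv ℝ (fun y => f t y)) x :=
    hf.fderiv_right (by norm_num)
  exact (h2.differentiableAt one_ne_zero).clm_apply (differentiableAt_const _)

lemma pderivT_sub {n : ℕ} {f g : ℝ → Vec n → ℝ} {t : ℝ} {x : Vec n}
    (hf : DifferentiableAt ℝ (fun s => f s x) t)
    (hg : DifferentiableAt ℝ (fun s => g s x) t) :
    pderivT (fun t x => f t x - g t x) t x = pderivT f t x - pderivT g t x :=
  deriv_sub hf hg

lemma pderivX_sub {n : ℕ} {f g : ℝ → Vec n → ℝ} {t : ℝ} {x : Vec n} {k : Fin n}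
    (hf : DifferentiableAt ℝ (fun y => f t y) x)
    (hg : DifferentiableAt ℝ (fun y => g t y) x) :
    pderivX (fun t x => f t x - g t x) k t x = pderivX f k t x - pderivX g k t x := by
  simp [pderivX, fderiv_fun_sub hf hg]

lemma pderivXX_sub {n : ℕ} {f g : ℝ → Vec n → ℝ} {t : ℝ} {x : Vec n} {k l : Fin n}
    (hf : ContDiffAt ℝ 2 (fun y => f t y) x)
    (hg : ContDiffAt ℝ 2 (fun y => g t y) x) :
    pderivXX (fun t x => f t x - g t x) k l t x
      = pderivXX f k l t x - pderivXX g k l t x := by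
  unfold pderivXX
  have hev : (fun y => pderivX (fun t x => f t x - g t x) l t y)
      =ᶠ[𝓝 x] fun y => pderivX f l t y - pderivX g l t y := by
    filter_upwards [hf.eventually (by simp), hg.eventually (by simp)] with y hfy hgy
    exact pderivX_sub (hfy.differentiableAt two_ne_zero) (hgy.differentiableAt two_ne_zero)
  rw [hev.fderiv_eq, fderiv_fun_sub (diff_pderivX hf) (diff_pderivX hg)]
  simp

lemma Lop_sub {n d : ℕ} {μ : ℝ → Vec n → Vec n} {σ : ℝ → Vec n → Fin n → Fin d → ℝ}
    {f g : ℝ → Vec n → ℝ} {t : ℝ} {x : Vec n}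
    (hf : ContDiffAt ℝ 2 (fun y => f t y) x)
    (hg : ContDiffAt ℝ 2 (fun y => g t y) x) :
    Lop μ σ (fun t x => f t x - g t x) t x = Lop μ σ f t x - Lop μ σ g t x := by
  have hf1 := hf.differentiableAt two_ne_zero
  have hg1 := hg.differentiableAt two_ne_zero
  unfold Lop
  have e1 : (∑ k, μ t x k * pderivX (fun t x => f t x - g t x) k t x)
      = ∑ k, (μ t x k * pderivX f k t x - μ t x k * pderivX g k t x) :=
    Finset.sum_congr rfl (fun k _ => by rw [pderivX_sub hf1 hg1]; ring)
  have e2 : (∑ k, ∑ l, (∑ a, σ t x k a * σ t x l a)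
        * pderivXX (fun t x => f t x - g t x) k l t x)
      = ∑ k, ∑ l, ((∑ a, σ t x k a * σ t x l a) * pderivXX f k l t x
          - (∑ a, σ t x k a * σ t x l a) * pderivXX g k l t x) :=
    Finset.sum_congr rfl (fun k _ => Finset.sum_congr rfl
      (fun l _ => by rw [pderivXX_sub hf hg]; ring))
  rw [e1, e2]
  simp only [Finset.sum_sub_distrib]
  ring

/-- Quadratic-form nonpositivity of the Hessian at a global max. -/
lemma quad_nonpos {n : ℕ} {u : Vec n → ℝ} {x : Vec n}
    (hu : ContDiffAt ℝ 2 u x) (hmax : ∀ y, u y ≤ u x) (v : Vec n) :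
    ∑ k, ∑ l, (v k * v l) *
      fderiv ℝ (fun y => fderiv ℝ u y (Pi.single l 1)) x (Pi.single k 1) ≤ 0 := by
  have hline : ∀ s : ℝ, HasDerivAt (fun r : ℝ => x + r • v) v s := by
    intro s
    simpa using ((hasDerivAt_id s).smul_const v).const_add x
  have htend : Tendsto (fun s : ℝ => x + s • v) (𝓝 0) (𝓝 x) := by
    have : Continuous (fun s : ℝ => x + s • v) := by continuity
    simpa using this.tendsto 0
  have hdiff_ev : ∀ᶠ s in 𝓝 (0:ℝ), DifferentiableAt ℝ u (x + s • v) := by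
    have h1 : ∀ᶠ y in 𝓝 x, ContDiffAt ℝ 2 u y := hu.eventually (by simp)
    exact htend.eventually (h1.mono (fun y hy => hy.differentiableAt two_ne_zero))
  have hev : ∀ᶠ s in 𝓝 (0:ℝ),
      HasDerivAt (fun s => u (x + s • v)) (fderiv ℝ u (x + s • v) v) s := by
    filter_upwards [hdiff_ev] with s hds
    exact hds.hasFDerivAt.comp_hasDerivAt s (hline s)
  have hdv : DifferentiableAt ℝ (fun y => fderiv ℝ u y v) x := by
    have h2 : ContDiffAt ℝ 1 (fderiv ℝ u) x := hu.fderiv_right (by norm_num)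
    exact (h2.differentiableAt one_ne_zero).clm_apply (differentiableAt_const _)
  have hG : HasDerivAt (fun s : ℝ => fderiv ℝ u (x + s • v) v)
      (fderiv ℝ (fun y => fderiv ℝ u y v) x v) (0:ℝ) := by
    have h2 : HasFDerivAt (fun y => fderiv ℝ u y v)
        (fderiv ℝ (fun y => fderiv ℝ u y v) x) (x + (0:ℝ) • v) := by
      rw [show x + (0:ℝ) • v = x by simp]
      exact hdv.hasFDerivAt
    exact h2.comp_hasDerivAt (0:ℝ) (hline 0)
  have hmax' : ∀ s : ℝ, u (x + s • v) ≤ u (x + (0:ℝ) • v) := by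
    intro s; simpa using hmax (x + s • v)
  have hkey : fderiv ℝ (fun y => fderiv ℝ u y v) x v ≤ 0 :=
    deriv2_nonpos hev hG hmax'
  -- expand the bilinear form
  have hv : ∀ (L : Vec n →L[ℝ] ℝ), L v = ∑ l, v l * L (Pi.single l 1) := by
    intro L
    conv_lhs => rw [pi_eq_sum_univ v]
    rw [map_sum]
    refine Finset.sum_congr rfl (fun l _ => ?_)
    have hsingle : (fun j => if l = j then (1:ℝ) else 0) = Pi.single l 1 := by
      funext j; rw [Pi.single_apply]; simp [eq_comm]
    rw [hsingle, ContinuousLinearMap.map_smul, smul_eq_mul]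
  have hdl : ∀ l : Fin n, DifferentiableAt ℝ (fun y => fderiv ℝ u y (Pi.single l 1)) x := by
    intro l
    have h2 : ContDiffAt ℝ 1 (fderiv ℝ u) x := hu.fderiv_right (by norm_num)
    exact (h2.differentiableAt one_ne_zero).clm_apply (differentiableAt_const _)
  have hfun : (fun y => fderiv ℝ u y v)
      = fun y => ∑ l, v l * fderiv ℝ u y (Pi.single l 1) := by
    funext y; exact hv _
  have hexp : fderiv ℝ (fun y => fderiv ℝ u y v) x
      = ∑ l, v l • fderiv ℝ (fun y => fderiv ℝ u y (Pi.single l 1)) x := by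
    rw [hfun]
    rw [fderiv_fun_sum (fun l _ => ((hdl l).const_mul (v l)))]
    exact Finset.sum_congr rfl (fun l _ => by
      rw [fderiv_const_mul (hdl l)])
  have : fderiv ℝ (fun y => fderiv ℝ u y v) x v
      = ∑ k, ∑ l, (v k * v l) *
        fderiv ℝ (fun y => fderiv ℝ u y (Pi.single l 1)) x (Pi.single k 1) := by
    rw [hexp, ContinuousLinearMap.sum_apply]
    conv_rhs => rw [Finset.sum_comm]
    refine Finset.sum_congr rfl (fun l _ => ?_)
    rw [ContinuousLinearMap.smul_apply, smul_eq_mul,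
      hv (fderiv ℝ (fun y => fderiv ℝ u y (Pi.single l 1)) x), Finset.mul_sum]
    exact Finset.sum_congr rfl (fun k _ => by ring)
  rw [← this]; exact hkey

/-! ### Hamiltonian facts -/

/-- `H_i(π,y) ≤ λ Σ_{j≠i} e^{(y_j-g_{ij}-y_i)/λ}` for any nonnegative `π`. -/
lemma Ham_le {m : ℕ} {lam : ℝ} (hlam : 0 < lam) (i : Fin m) (gi y π : Fin m → ℝ)
    (hπ : ∀ j, 0 ≤ π j) :
    Ham lam i gi y π ≤ lam * ∑ j ∈ Finset.univ.erase i,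
      Real.exp ((y j - gi j - y i) / lam) := by
  rw [Ham, Finset.mul_sum, Finset.mul_sum, ← Finset.sum_add_distrib]
  exact Finset.sum_le_sum (fun j _ => entropy_le hlam (hπ j))

/-- At the Gibbs policy the Hamiltonian equals `λ Σ e^{(y_j-g_{ij}-y_i)/λ}`. -/
lemma Ham_exp {m : ℕ} {lam : ℝ} (hlam : 0 < lam) (i : Fin m) (gi y : Fin m → ℝ) :
    Ham lam i gi y (fun j => Real.exp ((y j - gi j - y i) / lam))
      = lam * ∑ j ∈ Finset.univ.erase i, Real.exp ((y j - gi j - y i) / lam) := by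
  rw [Ham, Finset.mul_sum, Finset.mul_sum, ← Finset.sum_add_distrib]
  refine Finset.sum_congr rfl (fun j _ => ?_)
  rw [Real.log_exp]
  field_simp
  ring

/-- Difference of Hamiltonians in the `y` variable. -/
lemma Ham_sub {m : ℕ} (lam : ℝ) (i : Fin m) (gi y y' π : Fin m → ℝ) :
    Ham lam i gi y π - Ham lam i gi y' π
      = ∑ j ∈ Finset.univ.erase i, π j * ((y j - y' j) - (y i - y' i)) := by
  rw [Ham, Ham, add_sub_add_right_eq_sub, ← Finset.sum_sub_distrib]
  exact Finset.sum_congr rfl (fun j _ => by ring)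

/-! ### The auxiliary function ψ -/

def Qsum {n : ℕ} (x : Vec n) : ℝ := ∑ k, x k ^ 2

lemma Qsum_nonneg {n : ℕ} (x : Vec n) : 0 ≤ Qsum x :=
  Finset.sum_nonneg (fun k _ => sq_nonneg _)

lemma Qsum_cont {n : ℕ} : Continuous (Qsum (n := n)) := by
  unfold Qsum; continuity

lemma sq_le_Qsum {n : ℕ} (x : Vec n) (k : Fin n) : x k ^ 2 ≤ Qsum x :=
  Finset.single_le_sum (fun k _ => sq_nonneg (x k)) (Finset.mem_univ k)

lemma norm_le_Qsum {n : ℕ} (x : Vec n) : ‖x‖ ^ 2 ≤ Qsum x := by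
  have h1 : ‖x‖ ≤ Real.sqrt (Qsum x) := by
    apply pi_norm_le_iff_of_nonneg (Real.sqrt_nonneg _) |>.2
    intro k
    rw [Real.norm_eq_abs]
    nlinarith [Real.sq_sqrt (Qsum_nonneg x), Real.sqrt_nonneg (Qsum x),
      abs_nonneg (x k), sq_abs (x k), sq_le_Qsum x k]
  calc ‖x‖ ^ 2 ≤ Real.sqrt (Qsum x) ^ 2 := by
        apply pow_le_pow_left₀ (norm_nonneg _) h1
    _ = Qsum x := Real.sq_sqrt (Qsum_nonneg x)

lemma Qsum_hasFDerivAt {n : ℕ} (x : Vec n) :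
    HasFDerivAt Qsum (∑ k, (2 * x k) • ContinuousLinearMap.proj (R := ℝ)
      (φ := fun _ : Fin n => ℝ) k) x := by
  have h : ∀ k : Fin n, HasFDerivAt (fun y : Vec n => y k ^ 2)
      ((2 * x k) • ContinuousLinearMap.proj (R := ℝ) (φ := fun _ : Fin n => ℝ) k) x := by
    intro k
    have hp : HasFDerivAt (fun y : Vec n => y k)
        (ContinuousLinearMap.proj (R := ℝ) (φ := fun _ : Fin n => ℝ) k) x := by
      exact (ContinuousLinearMap.proj (R := ℝ) (φ := fun _ : Fin n => ℝ) k).hasFDerivAt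
    have := hp.mul hp
    have e : (fun y : Vec n => y k ^ 2) = (fun y => y k) * (fun y => y k) := by
      funext y; simp [sq]
    rw [e]
    refine this.congr_fderiv ?_
    ext w
    simp only [ContinuousLinearMap.add_apply, ContinuousLinearMap.smul_apply, smul_eq_mul]
    ring
  exact HasFDerivAt.fun_sum (fun k _ => h k)

lemma Qsum_contDiff {n : ℕ} : ContDiff ℝ 2 (Qsum (n := n)) := by
  unfold Qsum
  apply ContDiff.sum
  intro k _
  exact (ContinuousLinearMap.proj (R := ℝ) (φ := fun _ : Fin n => ℝ) k).contDiff.pow 2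

/-- the ψ-type function, with time-dependent factor `c`. -/
lemma psi_pderivX {n : ℕ} (c : ℝ → ℝ) (t : ℝ) (x : Vec n) (l : Fin n) :
    pderivX (fun t y => c t * (1 + Qsum y)) l t x = c t * (2 * x l) := by
  have h : HasFDerivAt (fun y : Vec n => c t * (1 + Qsum y))
      (c t • (∑ k, (2 * x k) • ContinuousLinearMap.proj (R := ℝ)
        (φ := fun _ : Fin n => ℝ) k)) x :=
    ((Qsum_hasFDerivAt x).const_add 1).const_mul (c t)
  rw [pderivX, h.fderiv]
  simp [ContinuousLinearMap.smul_apply, ContinuousLinearMap.sum_apply,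
    ContinuousLinearMap.proj_apply, Pi.single_apply]

lemma psi_pderivXX {n : ℕ} (c : ℝ → ℝ) (t : ℝ) (x : Vec n) (k l : Fin n) :
    pderivXX (fun t y => c t * (1 + Qsum y)) k l t x
      = if l = k then 2 * c t else 0 := by
  rw [pderivXX]
  have he : (fun y => pderivX (fun t y => c t * (1 + Qsum y)) l t y)
      = fun y : Vec n => (c t * 2) * y l := by
    funext y; rw [psi_pderivX]; ring
  rw [he]
  have h : HasFDerivAt (fun y : Vec n => (c t * 2) * y l)
      ((c t * 2) • ContinuousLinearMap.proj (R := ℝ) (φ := fun _ : Fin n => ℝ) l) x :=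
    ((ContinuousLinearMap.proj (R := ℝ) (φ := fun _ : Fin n => ℝ) l).hasFDerivAt).const_mul _
  rw [h.fderiv]
  simp [ContinuousLinearMap.smul_apply, Pi.single_apply]
  split <;> ring

lemma psi_contDiffAt {n : ℕ} (c : ℝ → ℝ) (t : ℝ) (x : Vec n) :
    ContDiffAt ℝ 2 (fun y : Vec n => c t * (1 + Qsum y)) x :=
  (contDiff_const.mul (contDiff_const.add Qsum_contDiff)).contDiffAt

lemma psi_pderivT {n : ℕ} (T β ε : ℝ) (t : ℝ) (x : Vec n) :
    pderivT (fun t y => (ε * Real.exp (β * (T - t))) * (1 + Qsum y)) t x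
      = -(β * ε) * Real.exp (β * (T - t)) * (1 + Qsum x) := by
  rw [pderivT]
  have h1 : HasDerivAt (fun s : ℝ => β * (T - s)) (β * (-1)) t :=
    (((hasDerivAt_id t).const_sub T)).const_mul β
  have h2 : HasDerivAt (fun s : ℝ => Real.exp (β * (T - s)))
      (Real.exp (β * (T - t)) * (β * (-1))) t := h1.exp
  have h3 : HasDerivAt (fun s : ℝ => (ε * Real.exp (β * (T - s))) * (1 + Qsum x))
      ((ε * (Real.exp (β * (T - t)) * (β * (-1)))) * (1 + Qsum x)) t :=
    (h2.const_mul ε).mul_const _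
  rw [h3.deriv]
  ring

lemma psi_t_hasDerivAt {n : ℕ} (T β ε : ℝ) (t : ℝ) (x : Vec n) :
    HasDerivAt (fun s : ℝ => (ε * Real.exp (β * (T - s))) * (1 + Qsum x))
      (-(β * ε) * Real.exp (β * (T - t)) * (1 + Qsum x)) t := by
  have h1 : HasDerivAt (fun s : ℝ => β * (T - s)) (β * (-1)) t :=
    (((hasDerivAt_id t).const_sub T)).const_mul β
  have h3 := ((h1.exp).const_mul ε).mul_const (1 + Qsum x)
  refine h3.congr_deriv ?_
  ring

lemma normx_le_one_add {nx Q : ℝ} (h0 : 0 ≤ nx) (h2 : nx ^ 2 ≤ Q) : nx ≤ 1 + Q := by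
  nlinarith [sq_nonneg (nx - 1)]

lemma drift_term_bound {Cg nx Q mu xk : ℝ} (hCg : 0 < Cg) (h0 : 0 ≤ nx)
    (h2 : nx ^ 2 ≤ Q) (hQ0 : 0 ≤ Q) (hmu : |mu| ≤ Cg * (1 + nx)) (hxk : |xk| ≤ nx) :
    mu * (2 * xk) ≤ 4 * Cg * (1 + Q) := by
  have hnx := normx_le_one_add h0 h2
  have habs1 : mu * (2 * xk) ≤ |mu| * (2 * |xk|) := by
    have h := le_abs_self (mu * (2 * xk))
    have he : |mu * (2 * xk)| = |mu| * (2 * |xk|) := by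
      rw [abs_mul, abs_mul, abs_two]
    linarith
  have habs2 : |mu| * (2 * |xk|) ≤ (Cg * (1 + nx)) * (2 * nx) := by
    apply mul_le_mul hmu (by linarith) (by positivity)
      (mul_nonneg hCg.le (by linarith))
  nlinarith [mul_le_mul_of_nonneg_left hnx hCg.le, mul_le_mul_of_nonneg_left h2 hCg.le]

lemma diff_sq_bound {Cg nx Q s : ℝ} (hCg : 0 < Cg) (h0 : 0 ≤ nx)
    (h2 : nx ^ 2 ≤ Q) (hQ0 : 0 ≤ Q) (hs : |s| ≤ Cg * (1 + nx)) :
    s * s ≤ 2 * Cg ^ 2 * (1 + Q) := by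
  have hnx := normx_le_one_add h0 h2
  have h4 : s * s ≤ |s| * |s| := by
    have h := le_abs_self (s * s)
    rw [abs_mul] at h
    linarith
  have h3 : |s| * |s| ≤ (Cg * (1 + nx)) * (Cg * (1 + nx)) :=
    mul_le_mul hs hs (abs_nonneg _) (mul_nonneg hCg.le (by linarith))
  have h5 : (1 + nx) * (1 + nx) ≤ 2 * (1 + Q) := by nlinarith [sq_nonneg (nx - 1)]
  nlinarith [sq_nonneg Cg]

lemma psi_contDiffAt' {n : ℕ} (T β ε t : ℝ) (x : Vec n) :
    ContDiffAt ℝ 2 (fun y : Vec n => (ε * Real.exp (β * (T - t))) * (1 + Qsum y)) x :=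
  (contDiff_const.mul (contDiff_const.add Qsum_contDiff)).contDiffAt

lemma psi_pderivX' {n : ℕ} (T β ε t : ℝ) (x : Vec n) (l : Fin n) :
    pderivX (fun t y => (ε * Real.exp (β * (T - t))) * (1 + Qsum y)) l t x
      = (ε * Real.exp (β * (T - t))) * (2 * x l) :=
  psi_pderivX (fun t => ε * Real.exp (β * (T - t))) t x l

lemma psi_pderivXX' {n : ℕ} (T β ε t : ℝ) (x : Vec n) (k l : Fin n) :
    pderivXX (fun t y => (ε * Real.exp (β * (T - t))) * (1 + Qsum y)) k l t x
      = if l = k then 2 * (ε * Real.exp (β * (T - t))) else 0 :=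
  psi_pderivXX (fun t => ε * Real.exp (β * (T - t))) t x k l

set_option maxHeartbeats 1000000 in
/-- **Maximum principle** for the coupled linear parabolic system on `[0,T]×ℝⁿ`. -/
lemma max_principle {n d m : ℕ} (S : SwitchingSetting n d m)
    (w : Fin m → ℝ → Vec n → ℝ) (c : Fin m → Fin m → ℝ × Vec n → ℝ)
    (hc : ∀ i j, ∀ p ∈ domD n S.T, 0 ≤ c i j p)
    (hwt : ∀ i, ∀ p ∈ domD n S.T, DifferentiableAt ℝ (fun s => w i s p.2) p.1)
    (hwx : ∀ i, ∀ p ∈ domD n S.T, ContDiffAt ℝ 2 (fun y => w i p.1 y) p.2)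
    (hcont : ∀ i, ContinuousOn (fun p : ℝ × Vec n => w i p.1 p.2) (domDbar n S.T))
    (hbdd : ∃ C, ∀ i, ∀ p ∈ domDbar n S.T, |w i p.1 p.2| ≤ C)
    (hterm : ∀ i x, w i S.T x = 0)
    (hineq : ∀ i, ∀ p ∈ domD n S.T,
      0 ≤ pderivT (w i) p.1 p.2
        + Lop (fun t x => S.μ t x i) (fun t x => S.σ t x i) (w i) p.1 p.2
        + ∑ j ∈ Finset.univ.erase i, c i j p * (w j p.1 p.2 - w i p.1 p.2)) :
    ∀ i, ∀ p ∈ domDbar n S.T, w i p.1 p.2 ≤ 0 := by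
  obtain ⟨C, hC⟩ := hbdd
  obtain ⟨Cg, hCg, hgrowth⟩ := S.growth
  set T := S.T with hTdef
  have hn0 : (0:ℝ) ≤ (n:ℝ) := Nat.cast_nonneg n
  have hd0 : (0:ℝ) ≤ (d:ℝ) := Nat.cast_nonneg d
  set β : ℝ := 4*(n:ℝ)*Cg + 2*(n:ℝ)*(d:ℝ)*Cg^2 + 1 with hβdef
  have hβ1 : 1 ≤ β := by
    have h1 : 0 ≤ 4*(n:ℝ)*Cg := by positivity
    have h2 : 0 ≤ 2*(n:ℝ)*(d:ℝ)*Cg^2 := by positivity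
    rw [hβdef]; linarith
  intro i0 p0 hp0
  by_contra hpos0
  push_neg at hpos0
  have hC0 : 0 ≤ C := le_trans (abs_nonneg _) (hC i0 p0 hp0)
  have hp0T : p0.1 ∈ Set.Icc (0:ℝ) T := hp0.1
  set ψ0 : ℝ := Real.exp (β * (T - p0.1)) * (1 + Qsum p0.2) with hψ0def
  have hψ0pos : 0 < ψ0 := by
    have := Qsum_nonneg p0.2
    positivity
  set ε : ℝ := w i0 p0.1 p0.2 / (2 * ψ0) with hεdef
  have hε : 0 < ε := div_pos hpos0 (by positivity)
  -- the penalized functions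
  set uu : Fin m → ℝ × Vec n → ℝ :=
    fun i p => w i p.1 p.2 - (ε * Real.exp (β * (T - p.1))) * (1 + Qsum p.2) with huu
  have huu0 : 0 < uu i0 p0 := by
    have he : (ε * Real.exp (β * (T - p0.1))) * (1 + Qsum p0.2) = ε * ψ0 := by
      rw [hψ0def]; ring
    have he2 : ε * ψ0 = w i0 p0.1 p0.2 / 2 := by
      rw [hεdef]; field_simp
    simp only [huu, he, he2]
    linarith
  -- lower bound of the penalization on the closed domain
  have hψlow : ∀ p : ℝ × Vec n, p ∈ domDbar n T → (1 + Qsum p.2)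
      ≤ Real.exp (β * (T - p.1)) * (1 + Qsum p.2) := by
    intro p hp
    have h1 : (0:ℝ) ≤ β * (T - p.1) := by
      have := hp.1.2
      nlinarith [hβ1]
    have := Qsum_nonneg p.2
    nlinarith [Real.one_le_exp h1]
  have huule : ∀ i, ∀ p ∈ domDbar n T, uu i p ≤ C - ε * (1 + Qsum p.2) := by
    intro i p hp
    have h1 : w i p.1 p.2 ≤ C := le_trans (le_abs_self _) (hC i p hp)
    have h2 := mul_le_mul_of_nonneg_left (hψlow p hp) hε.le
    simp only [huu]
    nlinarith
  -- compact exhaustion radius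
  set R : ℝ := Real.sqrt (C / ε) + ‖p0.2‖ + 1 with hRdef
  have hR0 : 0 ≤ R := by positivity
  have hRp0 : ‖p0.2‖ ≤ R := by
    rw [hRdef]; have := Real.sqrt_nonneg (C / ε); linarith
  have hR2 : C / ε ≤ R ^ 2 := by
    have h1 : Real.sqrt (C / ε) ≤ R := by
      rw [hRdef]; have := norm_nonneg p0.2; linarith
    have h2 : Real.sqrt (C / ε) ^ 2 ≤ R ^ 2 :=
      pow_le_pow_left₀ (Real.sqrt_nonneg _) h1 2
    rw [Real.sq_sqrt (div_nonneg hC0 hε.le)] at h2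
    exact h2
  set K : Set (ℝ × Vec n) := Set.Icc (0:ℝ) T ×ˢ Metric.closedBall (0 : Vec n) R
    with hKdef
  have hKcomp : IsCompact K := isCompact_Icc.prod (isCompact_closedBall 0 R)
  have hKsub : K ⊆ domDbar n T := fun q hq => ⟨hq.1, Set.mem_univ _⟩
  have hp0K : p0 ∈ K := by
    refine ⟨hp0T, ?_⟩
    rw [Metric.mem_closedBall, dist_zero_right]
    exact hRp0
  have hψcont : Continuous (fun p : ℝ × Vec n =>
      (ε * Real.exp (β * (T - p.1))) * (1 + Qsum p.2)) := by
    apply Continuous.mul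
    · exact continuous_const.mul
        (Real.continuous_exp.comp (continuous_const.mul (continuous_const.sub continuous_fst)))
    · exact continuous_const.add (Qsum_cont.comp continuous_snd)
  have hucont : ∀ i, ContinuousOn (uu i) K := fun i =>
    ((hcont i).mono hKsub).sub hψcont.continuousOn
  have hmax_i : ∀ i : Fin m, ∃ q ∈ K, ∀ p ∈ K, uu i p ≤ uu i q := by
    intro i
    obtain ⟨q, hqK, hq⟩ := hKcomp.exists_isMaxOn ⟨p0, hp0K⟩ (hucont i)
    exact ⟨q, hqK, fun p hp => hq hp⟩
  choose q hqK hqmax using hmax_i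
  obtain ⟨istar, _, histar⟩ := Finset.exists_max_image Finset.univ
    (fun i => uu i (q i)) ⟨i0, Finset.mem_univ _⟩
  set pstar := q istar with hpstar
  have hpstarbar : pstar ∈ domDbar n T := hKsub (hqK istar)
  have hM0 : 0 < uu istar pstar :=
    lt_of_lt_of_le huu0 (le_trans (hqmax i0 p0 hp0K) (histar i0 (Finset.mem_univ _)))
  have hglob : ∀ i, ∀ p ∈ domDbar n T, uu i p ≤ uu istar pstar := by
    intro i p hp
    by_cases hpR : ‖p.2‖ ≤ R
    · have hpK : p ∈ K := by
        refine ⟨hp.1, ?_⟩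
        rw [Metric.mem_closedBall, dist_zero_right]; exact hpR
      exact le_trans (hqmax i p hpK) (histar i (Finset.mem_univ _))
    · push_neg at hpR
      have h1 := huule i p hp
      have h2 : C < ε * Qsum p.2 := by
        have h3 : R ^ 2 < ‖p.2‖ ^ 2 := by
          exact pow_lt_pow_left₀ hpR hR0 two_ne_zero
        have h4 := norm_le_Qsum p.2
        have h5 : C / ε < Qsum p.2 := lt_of_le_of_lt hR2 (lt_of_lt_of_le h3 h4)
        calc C = ε * (C / ε) := by field_simp
        _ < ε * Qsum p.2 := mul_lt_mul_of_pos_left h5 hε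
      have h6 : ε * (1 + Qsum p.2) = ε + ε * Qsum p.2 := by ring
      have h7 : uu i p < 0 := by linarith
      linarith
  have htlt : pstar.1 < T := by
    rcases lt_or_eq_of_le hpstarbar.1.2 with h | h
    · exact h
    · exfalso
      have : uu istar pstar = 0 - (ε * Real.exp (β * (T - pstar.1))) * (1 + Qsum pstar.2) := by
        simp only [huu]
        rw [show pstar.1 = T from h, hterm]
      have hq0 := Qsum_nonneg pstar.2
      have hexp := Real.exp_pos (β * (T - pstar.1))
      have hpos : 0 < (ε * Real.exp (β * (T - pstar.1))) * (1 + Qsum pstar.2) :=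
        mul_pos (mul_pos hε hexp) (by linarith)
      linarith [hM0]
  have hdomD : pstar ∈ domD n T := ⟨⟨hpstarbar.1.1, htlt⟩, Set.mem_univ _⟩
  -- notation at the max point
  set t1 := pstar.1 with ht1
  set x1 := pstar.2 with hx1
  set E : ℝ := Real.exp (β * (T - t1)) with hE
  have hEpos : 0 < E := Real.exp_pos _
  have hQ0 : 0 ≤ Qsum x1 := Qsum_nonneg x1
  -- (a) time derivative bound
  have hA2 : pderivT (w istar) t1 x1 ≤ -(β * ε) * E * (1 + Qsum x1) := by
    have hFd1 := hwt istar pstar hdomD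
    have hFd2 := (psi_t_hasDerivAt T β ε t1 x1).differentiableAt
    have hFd : DifferentiableAt ℝ
        (fun s => w istar s x1 - (ε * Real.exp (β * (T - s))) * (1 + Qsum x1)) t1 :=
      hFd1.sub hFd2
    have hFmax : ∀ s ∈ Set.Icc t1 T,
        (fun s => w istar s x1 - (ε * Real.exp (β * (T - s))) * (1 + Qsum x1)) s
          ≤ (fun s => w istar s x1 - (ε * Real.exp (β * (T - s))) * (1 + Qsum x1)) t1 := by
      intro s hs
      have hmem : ((s, x1) : ℝ × Vec n) ∈ domDbar n T :=
        ⟨⟨le_trans hpstarbar.1.1 hs.1, hs.2⟩, Set.mem_univ _⟩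
      have h := hglob istar (s, x1) hmem
      simpa [huu] using h
    have hder := deriv_nonpos_right htlt hFd hFmax
    have hsplit : deriv (fun s => w istar s x1 - (ε * Real.exp (β * (T - s))) * (1 + Qsum x1)) t1
        = pderivT (w istar) t1 x1 - (-(β * ε) * E * (1 + Qsum x1)) := by
      rw [deriv_fun_sub hFd1 hFd2, (psi_t_hasDerivAt T β ε t1 x1).deriv]
      rfl
    rw [hsplit] at hder
    linarith
  -- (b) first space derivatives
  have hwx1 := hwx istar pstar hdomD
  have hdiffw : DifferentiableAt ℝ (fun y => w istar t1 y) x1 :=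
    hwx1.differentiableAt two_ne_zero
  have hdiffφ : DifferentiableAt ℝ
      (fun y : Vec n => (ε * Real.exp (β * (T - t1))) * (1 + Qsum y)) x1 :=
    (psi_contDiffAt' T β ε t1 x1).differentiableAt two_ne_zero
  have hGmax : ∀ y, w istar t1 y - (ε * Real.exp (β * (T - t1))) * (1 + Qsum y)
      ≤ w istar t1 x1 - (ε * Real.exp (β * (T - t1))) * (1 + Qsum x1) := by
    intro y
    have hmem : ((t1, y) : ℝ × Vec n) ∈ domDbar n T :=
      ⟨⟨hpstarbar.1.1, htlt.le⟩, Set.mem_univ _⟩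
    have h := hglob istar (t1, y) hmem
    simpa [huu] using h
  have hG0 : fderiv ℝ (fun y => w istar t1 y
      - (ε * Real.exp (β * (T - t1))) * (1 + Qsum y)) x1 = 0 := by
    have hloc : IsLocalMax (fun y => w istar t1 y
        - (ε * Real.exp (β * (T - t1))) * (1 + Qsum y)) x1 :=
      Filter.Eventually.of_forall hGmax
    exact hloc.fderiv_eq_zero
  have hA3 : ∀ k, pderivX (w istar) k t1 x1 = (ε * E) * (2 * x1 k) := by
    intro k
    have hsub : pderivX (fun t y => w istar t y
          - (ε * Real.exp (β * (T - t))) * (1 + Qsum y)) k t1 x1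
        = pderivX (w istar) k t1 x1
          - pderivX (fun t y => (ε * Real.exp (β * (T - t))) * (1 + Qsum y)) k t1 x1 :=
      pderivX_sub hdiffw hdiffφ
    have hzero : pderivX (fun t y => w istar t y
        - (ε * Real.exp (β * (T - t))) * (1 + Qsum y)) k t1 x1 = 0 := by
      show fderiv ℝ (fun y => w istar t1 y
        - (ε * Real.exp (β * (T - t1))) * (1 + Qsum y)) x1 (Pi.single k 1) = 0
      rw [hG0]; rfl
    have hval := psi_pderivX' T β ε t1 x1 k
    rw [hzero, hval] at hsub
    rw [hE]
    linarith
  -- (c) second derivatives: split off the penalization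
  have hφcd := psi_contDiffAt' T β ε t1 x1
  have hXXsub : ∀ k l, pderivXX (fun t y => w istar t y
        - (ε * Real.exp (β * (T - t))) * (1 + Qsum y)) k l t1 x1
      = pderivXX (w istar) k l t1 x1
        - (if l = k then 2 * (ε * E) else 0) := by
    intro k l
    rw [pderivXX_sub hwx1 hφcd, psi_pderivXX' T β ε t1 x1 k l, hE]
  -- quadratic form of the penalized function is nonpositive
  have hquad : ∀ v : Vec n, ∑ k, ∑ l, (v k * v l) *
      pderivXX (fun t y => w istar t y
        - (ε * Real.exp (β * (T - t))) * (1 + Qsum y)) k l t1 x1 ≤ 0 := by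
    intro v
    have hcd : ContDiffAt ℝ 2 (fun y => w istar t1 y
        - (ε * Real.exp (β * (T - t1))) * (1 + Qsum y)) x1 := hwx1.sub hφcd
    exact quad_nonpos hcd hGmax v
  -- plug all into the PDE inequality
  have hmain := hineq istar pstar hdomD
  have hcoup : (∑ j ∈ Finset.univ.erase istar,
      c istar j pstar * (w j pstar.1 pstar.2 - w istar pstar.1 pstar.2)) ≤ 0 := by
    apply Finset.sum_nonpos
    intro j _
    have h1 := hc istar j pstar hdomD
    have h2 : w j pstar.1 pstar.2 - w istar pstar.1 pstar.2 ≤ 0 := by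
      have := hglob j pstar hpstarbar
      simp only [huu] at this
      linarith
    exact mul_nonpos_iff.2 (Or.inl ⟨h1, h2⟩)
  have hLw : 0 ≤ pderivT (w istar) t1 x1
      + Lop (fun t x => S.μ t x istar) (fun t x => S.σ t x istar) (w istar) t1 x1 := by
    have : pderivT (w istar) pstar.1 pstar.2
        + Lop (fun t x => S.μ t x istar) (fun t x => S.σ t x istar) (w istar) pstar.1 pstar.2
        ≥ 0 := by linarith
    exact this
  -- expand Lop
  set μ1 : Vec n := S.μ t1 x1 istar with hμ1
  set σ1 : Fin n → Fin d → ℝ := S.σ t1 x1 istar with hσ1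
  have hLop : Lop (fun t x => S.μ t x istar) (fun t x => S.σ t x istar) (w istar) t1 x1
      = (∑ k, μ1 k * ((ε * E) * (2 * x1 k)))
        + (1/2) * ∑ k, ∑ l, (∑ a, σ1 k a * σ1 l a) * pderivXX (w istar) k l t1 x1 := by
    rw [Lop]
    congr 1
    exact Finset.sum_congr rfl (fun k _ => by rw [hA3 k])
  -- Hessian term bound
  have hHess : (∑ k, ∑ l, (∑ a, σ1 k a * σ1 l a) * pderivXX (w istar) k l t1 x1)
      ≤ ∑ k, (∑ a, σ1 k a * σ1 k a) * (2 * (ε * E)) := by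
    have hsplit : ∀ k l, (∑ a, σ1 k a * σ1 l a) * pderivXX (w istar) k l t1 x1
        = (∑ a, σ1 k a * σ1 l a) * pderivXX (fun t y => w istar t y
            - (ε * Real.exp (β * (T - t))) * (1 + Qsum y)) k l t1 x1
          + (∑ a, σ1 k a * σ1 l a) * (if l = k then 2 * (ε * E) else 0) := by
      intro k l
      rw [hXXsub k l]; ring
    calc (∑ k, ∑ l, (∑ a, σ1 k a * σ1 l a) * pderivXX (w istar) k l t1 x1)
        = (∑ k, ∑ l, (∑ a, σ1 k a * σ1 l a) * pderivXX (fun t y => w istar t y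
              - (ε * Real.exp (β * (T - t))) * (1 + Qsum y)) k l t1 x1)
          + ∑ k, ∑ l, (∑ a, σ1 k a * σ1 l a) * (if l = k then 2 * (ε * E) else 0) := by
          rw [← Finset.sum_add_distrib]
          refine Finset.sum_congr rfl (fun k _ => ?_)
          rw [← Finset.sum_add_distrib]
          exact Finset.sum_congr rfl (fun l _ => hsplit k l)
    _ ≤ 0 + ∑ k, ∑ l, (∑ a, σ1 k a * σ1 l a) * (if l = k then 2 * (ε * E) else 0) := by
          have hq : (∑ k, ∑ l, (∑ a, σ1 k a * σ1 l a) * pderivXX (fun t y => w istar t y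
              - (ε * Real.exp (β * (T - t))) * (1 + Qsum y)) k l t1 x1) ≤ 0 := by
            have hrw : (∑ k, ∑ l, (∑ a, σ1 k a * σ1 l a) * pderivXX (fun t y => w istar t y
                - (ε * Real.exp (β * (T - t))) * (1 + Qsum y)) k l t1 x1)
                = ∑ a, ∑ k, ∑ l, (σ1 k a * σ1 l a) * pderivXX (fun t y => w istar t y
                - (ε * Real.exp (β * (T - t))) * (1 + Qsum y)) k l t1 x1 := by
              calc (∑ k, ∑ l, (∑ a, σ1 k a * σ1 l a) * pderivXX (fun t y => w istar t y
                  - (ε * Real.exp (β * (T - t))) * (1 + Qsum y)) k l t1 x1)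
                  = ∑ k, ∑ l, ∑ a, (σ1 k a * σ1 l a) * pderivXX (fun t y => w istar t y
                  - (ε * Real.exp (β * (T - t))) * (1 + Qsum y)) k l t1 x1 :=
                    Finset.sum_congr rfl (fun k _ => Finset.sum_congr rfl
                      (fun l _ => Finset.sum_mul _ _ _))
              _ = ∑ k, ∑ a, ∑ l, (σ1 k a * σ1 l a) * pderivXX (fun t y => w istar t y
                  - (ε * Real.exp (β * (T - t))) * (1 + Qsum y)) k l t1 x1 :=
                    Finset.sum_congr rfl (fun k _ => Finset.sum_comm)
              _ = ∑ a, ∑ k, ∑ l, (σ1 k a * σ1 l a) * pderivXX (fun t y => w istar t y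
                  - (ε * Real.exp (β * (T - t))) * (1 + Qsum y)) k l t1 x1 :=
                    Finset.sum_comm
            rw [hrw]
            apply Finset.sum_nonpos
            intro a _
            exact hquad (fun k => σ1 k a)
          linarith
    _ = ∑ k, (∑ a, σ1 k a * σ1 k a) * (2 * (ε * E)) := by
          rw [zero_add]
          refine Finset.sum_congr rfl (fun k _ => ?_)
          have hite : ∀ l : Fin n, (∑ a, σ1 k a * σ1 l a) * (if l = k then 2 * (ε * E) else 0)
              = if l = k then (∑ a, σ1 k a * σ1 l a) * (2 * (ε * E)) else 0 := by
            intro l; split <;> simp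
          calc (∑ l, (∑ a, σ1 k a * σ1 l a) * (if l = k then 2 * (ε * E) else 0))
              = ∑ l, (if l = k then (∑ a, σ1 k a * σ1 l a) * (2 * (ε * E)) else 0) :=
                Finset.sum_congr rfl (fun l _ => hite l)
          _ = if k ∈ Finset.univ then (∑ a, σ1 k a * σ1 k a) * (2 * (ε * E)) else 0 :=
                Finset.sum_ite_eq' Finset.univ k (fun l => (∑ a, σ1 k a * σ1 l a) * (2 * (ε * E)))
          _ = (∑ a, σ1 k a * σ1 k a) * (2 * (ε * E)) := by simp
  -- growth bounds at the max point
  have ht1mem : t1 ∈ Set.Icc (0:ℝ) S.T := hpstarbar.1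
  have hgrow := hgrowth t1 ht1mem x1 istar
  have hμnorm : ‖S.μ t1 x1 istar‖ ≤ Cg * (1 + ‖x1‖) := by
    have := norm_nonneg (S.σ t1 x1 istar); linarith
  have hσnorm : ‖S.σ t1 x1 istar‖ ≤ Cg * (1 + ‖x1‖) := by
    have := norm_nonneg (S.μ t1 x1 istar); linarith
  have hnx2 : ‖x1‖ ^ 2 ≤ Qsum x1 := norm_le_Qsum x1
  have hnx : ‖x1‖ ≤ 1 + Qsum x1 := normx_le_one_add (norm_nonneg x1) hnx2
  have hMnn : 0 ≤ Cg * (1 + ‖x1‖) := mul_nonneg hCg.le (by positivity)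
  have hμk : ∀ k, |μ1 k| ≤ Cg * (1 + ‖x1‖) := by
    intro k
    have h := norm_le_pi_norm (S.μ t1 x1 istar) k
    rw [Real.norm_eq_abs] at h
    exact le_trans h hμnorm
  have hσka : ∀ k a, |σ1 k a| ≤ Cg * (1 + ‖x1‖) := by
    intro k a
    have h1 := norm_le_pi_norm (S.σ t1 x1 istar) k
    have h2 := norm_le_pi_norm (S.σ t1 x1 istar k) a
    rw [Real.norm_eq_abs] at h2
    exact le_trans h2 (le_trans h1 hσnorm)
  have hxk : ∀ k, |x1 k| ≤ ‖x1‖ := by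
    intro k
    have h := norm_le_pi_norm x1 k
    rwa [Real.norm_eq_abs] at h
  set A : ℝ := ∑ k, μ1 k * (2 * x1 k) with hAdef
  set B : ℝ := ∑ k, ∑ a, σ1 k a * σ1 k a with hBdef
  have hA_le : A ≤ 4 * (n:ℝ) * Cg * (1 + Qsum x1) := by
    have hterm : ∀ k : Fin n, μ1 k * (2 * x1 k) ≤ 4 * Cg * (1 + Qsum x1) := by
      intro k
      exact drift_term_bound hCg (norm_nonneg x1) hnx2 hQ0 (hμk k) (hxk k)
    calc A ≤ ∑ _k : Fin n, 4 * Cg * (1 + Qsum x1) :=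
          Finset.sum_le_sum (fun k _ => hterm k)
    _ = (n:ℝ) * (4 * Cg * (1 + Qsum x1)) := by
          simp [Finset.sum_const, Finset.card_univ, nsmul_eq_mul]
    _ = 4 * (n:ℝ) * Cg * (1 + Qsum x1) := by ring
  have hB_le : B ≤ 2 * (n:ℝ) * (d:ℝ) * Cg^2 * (1 + Qsum x1) := by
    have hterma : ∀ (k : Fin n) (a : Fin d), σ1 k a * σ1 k a ≤ 2 * Cg^2 * (1 + Qsum x1) := by
      intro k a
      exact diff_sq_bound hCg (norm_nonneg x1) hnx2 hQ0 (hσka k a)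
    have htermk : ∀ k : Fin n, (∑ a, σ1 k a * σ1 k a)
        ≤ (d:ℝ) * (2 * Cg^2 * (1 + Qsum x1)) := by
      intro k
      calc (∑ a, σ1 k a * σ1 k a) ≤ ∑ _a : Fin d, 2 * Cg^2 * (1 + Qsum x1) :=
            Finset.sum_le_sum (fun a _ => hterma k a)
      _ = (d:ℝ) * (2 * Cg^2 * (1 + Qsum x1)) := by
            simp [Finset.sum_const, Finset.card_univ, nsmul_eq_mul]
    calc B ≤ ∑ _k : Fin n, (d:ℝ) * (2 * Cg^2 * (1 + Qsum x1)) :=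
          Finset.sum_le_sum (fun k _ => htermk k)
    _ = (n:ℝ) * ((d:ℝ) * (2 * Cg^2 * (1 + Qsum x1))) := by
          simp [Finset.sum_const, Finset.card_univ, nsmul_eq_mul]
    _ = 2 * (n:ℝ) * (d:ℝ) * Cg^2 * (1 + Qsum x1) := by ring
  -- pull the scalar factor out of the sums
  have hsum1 : (∑ k, μ1 k * ((ε * E) * (2 * x1 k))) = (ε * E) * A := by
    rw [hAdef, Finset.mul_sum]
    exact Finset.sum_congr rfl (fun k _ => by ring)
  have hsum2 : (∑ k, (∑ a, σ1 k a * σ1 k a) * (2 * (ε * E))) = 2 * ((ε * E) * B) := by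
    rw [hBdef, Finset.mul_sum, Finset.mul_sum]
    exact Finset.sum_congr rfl (fun k _ => by ring)
  -- final contradiction
  have hstep : pderivT (w istar) t1 x1
      + Lop (fun t x => S.μ t x istar) (fun t x => S.σ t x istar) (w istar) t1 x1
      ≤ -(β * ε) * E * (1 + Qsum x1) + (ε * E) * A + (ε * E) * B := by
    rw [hLop, hsum1]
    have h4 : (1/2) * (∑ k, ∑ l, (∑ a, σ1 k a * σ1 l a) * pderivXX (w istar) k l t1 x1)
        ≤ (1/2) * (∑ k, (∑ a, σ1 k a * σ1 k a) * (2 * (ε * E))) := by linarith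
    rw [hsum2] at h4
    have h6 := add_le_add hA2 (add_le_add_right h4 ((ε * E) * A))
    have h7 : -(β * ε) * E * (1 + Qsum x1) + ((ε * E) * A + 1 / 2 * (2 * ((ε * E) * B)))
        = -(β * ε) * E * (1 + Qsum x1) + (ε * E) * A + (ε * E) * B := by ring
    rw [h7] at h6
    exact h6
  have hP : 0 < ε * E := mul_pos hε hEpos
  have hab : A + B ≤ (β - 1) * (1 + Qsum x1) := by
    rw [hβdef]; nlinarith [hA_le, hB_le]
  have hfin : (ε * E) * (A + B) ≤ (ε * E) * ((β - 1) * (1 + Qsum x1)) :=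
    mul_le_mul_of_nonneg_left hab hP.le
  have hneg : -(β * ε) * E * (1 + Qsum x1) = -((ε * E) * (β * (1 + Qsum x1))) := by ring
  have hsplit2 : (ε * E) * A + (ε * E) * B = (ε * E) * (A + B) := by ring
  have heq : (ε * E) * (β * (1 + Qsum x1))
      = (ε * E) * ((β - 1) * (1 + Qsum x1)) + (ε * E) * (1 + Qsum x1) := by ring
  have hQE : 0 < (ε * E) * (1 + Qsum x1) := mul_pos hP (by linarith)
  linarith [hLw, hstep, hfin, hsplit2, heq, hQE, hneg.le, hneg.ge]

/-- **Policy improvement, Proposition 4.1.**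
Along the policy iteration generated from any continuous initial guess,
`V_i^n ≤ V_i^{n+1} ≤ V_i^λ` on `D̄` for every `n ≥ 1` and every regime `i`,
where `(V₁^λ,…,V_m^λ)` is a bounded classical solution of the exploratory HJB
system. -/
theorem policy_improvement {n d m : ℕ} (S : SwitchingSetting n d m)
    (α : ℝ) (hα : HolderAssumption S α) (lam : ℝ) (hlam : 0 < lam)
    (Vlam : Fin m → ℝ → Vec n → ℝ)
    (hVlam : IsClassicalSolutionExp S lam Vlam)
    (hVlam_bdd : ∃ C, ∀ i, ∀ p ∈ domDbar n S.T, |Vlam i p.1 p.2| ≤ C)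
    (V : ℕ → Fin m → ℝ → Vec n → ℝ)
    (hV : PolicyIterSeq S lam V) :
    ∀ N : ℕ, 1 ≤ N → ∀ i, ∀ p ∈ domDbar n S.T,
      V N i p.1 p.2 ≤ V (N + 1) i p.1 p.2 ∧ V (N + 1) i p.1 p.2 ≤ Vlam i p.1 p.2 := by
  intro N hN
  obtain ⟨M, rfl⟩ : ∃ M, N = M + 1 := ⟨N - 1, (Nat.succ_pred_eq_of_pos hN).symm⟩
  obtain ⟨h12a, hconta, ⟨Ca, hCa⟩, hterma, hpdea⟩ := hV.2 M
  obtain ⟨h12b, hcontb, ⟨Cb, hCb⟩, htermb, hpdeb⟩ := hV.2 (M + 1)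
  obtain ⟨hl12, hlcont, hlpde, hlterm⟩ := hVlam
  obtain ⟨Cl, hCl⟩ := hVlam_bdd
  -- first comparison : V^{M+1} ≤ V^{M+2}
  have claim1 : ∀ i, ∀ p ∈ domDbar n S.T,
      (fun i (t : ℝ) (x : Vec n) => V (M + 1) i t x - V (M + 1 + 1) i t x) i p.1 p.2 ≤ 0 := by
    apply max_principle S
      (fun i t x => V (M + 1) i t x - V (M + 1 + 1) i t x)
      (fun i j p => Real.exp ((V (M + 1) j p.1 p.2 - S.g i j - V (M + 1) i p.1 p.2) / lam))
    · intro i j p _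
      exact (Real.exp_pos _).le
    · intro i p hp
      exact ((h12a i).2.1 p hp).sub ((h12b i).2.1 p hp)
    · intro i p hp
      exact ((h12a i).2.2.1 p hp).sub ((h12b i).2.2.1 p hp)
    · intro i
      exact (hconta i).sub (hcontb i)
    · refine ⟨Ca + Cb, fun i p hp => ?_⟩
      have h1 := abs_le.1 (hCa i p hp)
      have h2 := abs_le.1 (hCb i p hp)
      rw [abs_le]
      constructor <;> [linarith; linarith]
    · intro i x
      rw [hterma i x, htermb i x, sub_self]
    · intro i p hp
      have e1 := hpdea i p hp
      have e2 := hpdeb i p hp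
      have hdT : pderivT (fun t x => V (M + 1) i t x - V (M + 1 + 1) i t x) p.1 p.2
          = pderivT (V (M + 1) i) p.1 p.2 - pderivT (V (M + 1 + 1) i) p.1 p.2 :=
        pderivT_sub ((h12a i).2.1 p hp) ((h12b i).2.1 p hp)
      have hdL : Lop (fun t x => S.μ t x i) (fun t x => S.σ t x i)
            (fun t x => V (M + 1) i t x - V (M + 1 + 1) i t x) p.1 p.2
          = Lop (fun t x => S.μ t x i) (fun t x => S.σ t x i) (V (M + 1) i) p.1 p.2
            - Lop (fun t x => S.μ t x i) (fun t x => S.σ t x i) (V (M + 1 + 1) i) p.1 p.2 :=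
        Lop_sub ((h12a i).2.2.1 p hp) ((h12b i).2.2.1 p hp)
      rw [hdT, hdL]
      have hle : Ham lam i (S.g i) (fun j => V (M + 1) j p.1 p.2)
            (fun j => Real.exp ((V M j p.1 p.2 - S.g i j - V M i p.1 p.2) / lam))
          ≤ lam * ∑ j ∈ Finset.univ.erase i,
              Real.exp ((V (M + 1) j p.1 p.2 - S.g i j - V (M + 1) i p.1 p.2) / lam) :=
        Ham_le hlam i _ _ _ (fun j => (Real.exp_pos _).le)
      have heq : Ham lam i (S.g i) (fun j => V (M + 1) j p.1 p.2)
            (fun j => Real.exp ((V (M + 1) j p.1 p.2 - S.g i j - V (M + 1) i p.1 p.2) / lam))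
          = lam * ∑ j ∈ Finset.univ.erase i,
              Real.exp ((V (M + 1) j p.1 p.2 - S.g i j - V (M + 1) i p.1 p.2) / lam) :=
        Ham_exp hlam i _ _
      have hsub := Ham_sub lam i (S.g i) (fun j => V (M + 1) j p.1 p.2)
        (fun j => V (M + 1 + 1) j p.1 p.2)
        (fun j => Real.exp ((V (M + 1) j p.1 p.2 - S.g i j - V (M + 1) i p.1 p.2) / lam))
      linarith [e1, e2, hle, heq, hsub]
  -- second comparison : V^{M+2} ≤ V^λ
  have claim2 : ∀ i, ∀ p ∈ domDbar n S.T,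
      (fun i (t : ℝ) (x : Vec n) => V (M + 1 + 1) i t x - Vlam i t x) i p.1 p.2 ≤ 0 := by
    apply max_principle S
      (fun i t x => V (M + 1 + 1) i t x - Vlam i t x)
      (fun i j p => Real.exp ((V (M + 1) j p.1 p.2 - S.g i j - V (M + 1) i p.1 p.2) / lam))
    · intro i j p _
      exact (Real.exp_pos _).le
    · intro i p hp
      exact ((h12b i).2.1 p hp).sub ((hl12 i).2.1 p hp)
    · intro i p hp
      exact ((h12b i).2.2.1 p hp).sub ((hl12 i).2.2.1 p hp)
    · intro i
      exact (hcontb i).sub (hlcont i)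
    · refine ⟨Cb + Cl, fun i p hp => ?_⟩
      have h1 := abs_le.1 (hCb i p hp)
      have h2 := abs_le.1 (hCl i p hp)
      rw [abs_le]
      constructor <;> [linarith; linarith]
    · intro i x
      rw [htermb i x, hlterm i x, sub_self]
    · intro i p hp
      have e2 := hpdeb i p hp
      have elam := hlpde i p hp
      have hdT : pderivT (fun t x => V (M + 1 + 1) i t x - Vlam i t x) p.1 p.2
          = pderivT (V (M + 1 + 1) i) p.1 p.2 - pderivT (Vlam i) p.1 p.2 :=
        pderivT_sub ((h12b i).2.1 p hp) ((hl12 i).2.1 p hp)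
      have hdL : Lop (fun t x => S.μ t x i) (fun t x => S.σ t x i)
            (fun t x => V (M + 1 + 1) i t x - Vlam i t x) p.1 p.2
          = Lop (fun t x => S.μ t x i) (fun t x => S.σ t x i) (V (M + 1 + 1) i) p.1 p.2
            - Lop (fun t x => S.μ t x i) (fun t x => S.σ t x i) (Vlam i) p.1 p.2 :=
        Lop_sub ((h12b i).2.2.1 p hp) ((hl12 i).2.2.1 p hp)
      rw [hdT, hdL]
      have hle : Ham lam i (S.g i) (fun j => Vlam j p.1 p.2)
            (fun j => Real.exp ((V (M + 1) j p.1 p.2 - S.g i j - V (M + 1) i p.1 p.2) / lam))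
          ≤ lam * ∑ j ∈ Finset.univ.erase i,
              Real.exp ((Vlam j p.1 p.2 - S.g i j - Vlam i p.1 p.2) / lam) :=
        Ham_le hlam i _ _ _ (fun j => (Real.exp_pos _).le)
      have hsub := Ham_sub lam i (S.g i) (fun j => V (M + 1 + 1) j p.1 p.2)
        (fun j => Vlam j p.1 p.2)
        (fun j => Real.exp ((V (M + 1) j p.1 p.2 - S.g i j - V (M + 1) i p.1 p.2) / lam))
      linarith [e2, elam, hle, hsub]
  intro i p hp
  have h1 := claim1 i p hp
  have h2 := claim2 i p hp
  simp only [] at h1 h2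
  exact ⟨by linarith, by linarith⟩

end
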